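/- Let (A_t)_{t=0}^T, (B_t)_{t=0}^T be integer staircase sequences with A_t ≤ B_t for all t, and suppose all prices P_t are nonnegative. Then there exists an optimal feasible 0-1 solution (x_t) with Σ_{t=1}^T x_t = A_T. -/

import Mathlib

def Staircase (T : ℕ) (Z : ℕ → ℤ) : Prop :=
  Z 0 = 0 ∧ ∀ t ∈ Finset.Icc 1 T, Z (t - 1) ≤ Z t ∧ Z t ≤ Z (t - 1) + 1

def Binary (T : ℕ) (x : ℕ → ℤ) : Prop :=
  ∀ t ∈ Finset.Icc 1 T, x t = 0 ∨ x t = 1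

def Feasible (T : ℕ) (A B : ℕ → ℤ) (x : ℕ → ℤ) : Prop :=
  Binary T x ∧ ∀ t ∈ Finset.Icc 1 T,
    A t ≤ ∑ i ∈ Finset.Icc 1 t, x i ∧ ∑ i ∈ Finset.Icc 1 t, x i ≤ B t

noncomputable def cost (T : ℕ) (P : ℕ → ℝ) (x : ℕ → ℤ) : ℝ :=
  ∑ t ∈ Finset.Icc 1 T, P t * (x t : ℝ)

lemma stair_mono {T : ℕ} {Z : ℕ → ℤ} (h : Staircase T Z) :
    ∀ s t : ℕ, s ≤ t → t ≤ T → Z s ≤ Z t := by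
  intro s t hst htT
  induction t with
  | zero => interval_cases s; rfl
  | succ n ih =>
    rcases Nat.lt_or_ge s (n+1) with hlt | hge
    · have h1 := (h.2 (n+1) (by simp; omega)).1
      simp only [Nat.add_sub_cancel] at h1
      exact le_trans (ih (by omega) (by omega)) h1
    · have : s = n+1 := by omega
      simp [this]

lemma telescope (y : ℕ → ℤ) (C : ℤ) (hC : 0 ≤ C) :
    ∀ t : ℕ, (∑ i ∈ Finset.Icc 1 t,
      (min (∑ j ∈ Finset.Icc 1 i, y j) C - min (∑ j ∈ Finset.Icc 1 (i-1), y j) C))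
      = min (∑ j ∈ Finset.Icc 1 t, y j) C := by
  intro t
  induction t with
  | zero => simp [hC]
  | succ n ih =>
    rw [Finset.sum_Icc_succ_top (by omega : 1 ≤ n+1), ih]
    simp

theorem stmt13 (T : ℕ) (A B : ℕ → ℤ) (P : ℕ → ℝ)
    (hA : Staircase T A) (hB : Staircase T B)
    (hAB : ∀ t ∈ Finset.Icc 1 T, A t ≤ B t)
    (hP : ∀ t ∈ Finset.Icc 1 T, 0 ≤ P t) :
    ∃ x : ℕ → ℤ, Feasible T A B x ∧ (∑ t ∈ Finset.Icc 1 T, x t) = A T ∧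
      ∀ y : ℕ → ℤ, Feasible T A B y → cost T P x ≤ cost T P y := by
  have hA0 : A 0 = 0 := hA.1
  have hAT0 : (0:ℤ) ≤ A T := hA0 ▸ stair_mono hA 0 T (Nat.zero_le _) le_rfl
  -- base feasible solution
  have x0sum : ∀ t : ℕ, t ≤ T → ∑ i ∈ Finset.Icc 1 t, (A i - A (i-1)) = A t := by
    intro t htT
    induction t with
    | zero => simp [hA0]
    | succ n ih =>
      rw [Finset.sum_Icc_succ_top (by omega : 1 ≤ n+1), ih (by omega)]
      simp
  have x0feas : Feasible T A B (fun t => A t - A (t-1)) := by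
    constructor
    · intro t ht
      have := hA.2 t ht
      show A t - A (t-1) = 0 ∨ A t - A (t-1) = 1
      omega
    · intro t ht
      simp only [Finset.mem_Icc] at ht
      rw [x0sum t ht.2]
      exact ⟨le_refl _, hAB t (by simp [ht])⟩
  -- the set of costs is finite and nonempty
  set Cset : Set ℝ := cost T P '' {y | Feasible T A B y} with hCset
  have hsub : Cset ⊆ ((Finset.Icc 1 T).powerset.image (fun s => ∑ t ∈ s, P t) : Finset ℝ) := by
    rintro c ⟨y, hy, rfl⟩
    simp only [Finset.coe_image, Set.mem_image, Finset.mem_coe, Finset.mem_powerset]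
    refine ⟨(Finset.Icc 1 T).filter (fun t => y t = 1), Finset.filter_subset _ _, ?_⟩
    rw [Finset.sum_filter]
    unfold cost
    apply Finset.sum_congr rfl
    intro t ht
    rcases hy.1 t ht with h0 | h0 <;> simp [h0]
  have hfin : Cset.Finite := Set.Finite.subset (Finset.finite_toSet _) hsub
  have hne : Cset.Nonempty := ⟨_, ⟨_, x0feas, rfl⟩⟩
  obtain ⟨c, hc, hcmin⟩ : ∃ a ∈ Cset, ∀ a' ∈ Cset, id a' ≤ id a → id a = id a' := by
    obtain ⟨i, hi⟩ := Set.Finite.exists_minimalFor id Cset hfin hne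
    exact ⟨i, hi.1, fun a' ha' h => le_antisymm (hi.2 ha' h) h⟩
  obtain ⟨y, hy, hyc⟩ := hc
  have hymin : ∀ z, Feasible T A B z → cost T P y ≤ cost T P z := by
    intro z hz
    by_contra hlt
    push_neg at hlt
    have := hcmin (cost T P z) ⟨z, hz, rfl⟩ (by simp [hyc]; linarith)
    simp [hyc] at this
    linarith
  -- now truncate y
  set S : ℕ → ℤ := fun t => ∑ j ∈ Finset.Icc 1 t, y j with hS
  set C := A T with hC
  set x : ℕ → ℤ := fun t => min (S t) C - min (S (t-1)) C with hx
  have hxsum : ∀ t : ℕ, ∑ i ∈ Finset.Icc 1 t, x i = min (S t) C :=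
    telescope y C hAT0
  have hSstep : ∀ t ∈ Finset.Icc 1 T, S t = S (t-1) + y t := by
    intro t ht
    simp only [Finset.mem_Icc] at ht
    obtain ⟨n, rfl⟩ : ∃ n, t = n + 1 := ⟨t - 1, by omega⟩
    rw [hS]
    simp [Finset.sum_Icc_succ_top (by omega : 1 ≤ n+1)]
  have hxy : ∀ t ∈ Finset.Icc 1 T, 0 ≤ x t ∧ x t ≤ y t := by
    intro t ht
    have hst := hSstep t ht
    rcases hy.1 t ht with h0 | h1 <;> simp only [hx] <;> omega
  have hxbin : Binary T x := by
    intro t ht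
    have hst := hSstep t ht
    rcases hy.1 t ht with h0 | h1 <;> simp only [hx] <;> omega
  have hxfeas : Feasible T A B x := by
    refine ⟨hxbin, ?_⟩
    intro t ht
    rw [hxsum]
    simp only [Finset.mem_Icc] at ht
    have hAt : A t ≤ C := stair_mono hA t T ht.2 le_rfl
    have := hy.2 t (by simp [ht])
    constructor
    · exact le_min this.1 hAt
    · exact le_trans (min_le_left _ _) this.2
  have hxtot : ∑ t ∈ Finset.Icc 1 T, x t = A T := by
    rw [hxsum]
    rcases Nat.eq_zero_or_pos T with h0 | hpos
    · subst h0; simp [hS, hA0, hC]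
    · have h := (hy.2 T (by simp only [Finset.mem_Icc]; omega)).1
      have hST : S T = ∑ i ∈ Finset.Icc 1 T, y i := rfl
      simp only [hC]
      omega
  have hcost : cost T P x ≤ cost T P y := by
    unfold cost
    apply Finset.sum_le_sum
    intro t ht
    have := hxy t ht
    have hp := hP t ht
    have : (x t : ℝ) ≤ (y t : ℝ) := by exact_mod_cast this.2
    nlinarith
  exact ⟨x, hxfeas, hxtot, fun z hz => le_trans hcost (hymin z hz)⟩
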